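/- A finitely generated torsion-free abelian group G is cyclic if and only if it satisfies the sentence: for all x₁, x₂, x₃ there exists x₄ such that x₁ = x₂·x₄² or x₁ = x₃·x₄² or x₂ = x₃·x₄². -/

import Mathlib

private lemma cyc_helper {G : Type*} [CommGroup G] (g : G) (a b : ℤ) (hab : a % 2 = b % 2) :
    ∃ k : ℤ, g ^ a = g ^ b * (g ^ k) ^ 2 := by
  refine ⟨(a - b) / 2, ?_⟩
  rw [← zpow_natCast (g ^ ((a - b) / 2)) 2, ← zpow_mul, ← zpow_add]
  congr 1
  omega

/-- A finitely generated torsion-free abelian group is cyclic if and only if it satisfies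
the `∀∃`-sentence `∀ x₁ x₂ x₃ ∃ x₄, x₁ = x₂x₄² ∨ x₁ = x₃x₄² ∨ x₂ = x₃x₄²`. -/
theorem stmt_0 (G : Type*) [CommGroup G] [Group.FG G]
    (htf : ∀ g : G, g ≠ 1 → ¬IsOfFinOrder g) :
    IsCyclic G ↔
      ∀ x₁ x₂ x₃ : G, ∃ x₄ : G,
        x₁ = x₂ * x₄ ^ 2 ∨ x₁ = x₃ * x₄ ^ 2 ∨ x₂ = x₃ * x₄ ^ 2 := by
  constructor
  · rintro ⟨g, hg⟩ x₁ x₂ x₃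
    obtain ⟨a, ha⟩ := hg x₁
    obtain ⟨b, hb⟩ := hg x₂
    obtain ⟨c, hc⟩ := hg x₃
    subst ha hb hc
    have key : a % 2 = b % 2 ∨ a % 2 = c % 2 ∨ b % 2 = c % 2 := by omega
    rcases key with hp | hp | hp
    · obtain ⟨k, hk⟩ := cyc_helper g a b hp; exact ⟨g ^ k, Or.inl hk⟩
    · obtain ⟨k, hk⟩ := cyc_helper g a c hp; exact ⟨g ^ k, Or.inr (Or.inl hk)⟩
    · obtain ⟨k, hk⟩ := cyc_helper g b c hp; exact ⟨g ^ k, Or.inr (Or.inr hk)⟩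
  · intro h
    haveI htf' : IsAddTorsionFree (Additive G) := IsAddTorsionFree.of_not_isOfFinAddOrder fun a ha hfin =>
      htf a.toMul ha (isOfFinAddOrder_ofMul_iff.mp hfin)
    haveI : Module.Finite ℤ (Additive G) := Module.Finite.iff_addGroup_fg.mpr inferInstance
    haveI : NoZeroSMulDivisors ℤ (Additive G) := IsAddTorsionFree.to_noZeroSMulDivisors_int
    haveI : Module.Free ℤ (Additive G) := Module.free_of_finite_type_torsion_free'
    set ι := Module.Free.ChooseBasisIndex ℤ (Additive G)
    let b : Module.Basis ι ℤ (Additive G) := Module.Free.chooseBasis ℤ (Additive G)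
    -- ι has at most one element
    have hsub : Subsingleton ι := by
      by_contra hns
      rw [not_subsingleton_iff_nontrivial] at hns
      obtain ⟨i, j, hij⟩ := hns
      obtain ⟨y, hy⟩ := h (b i).toMul (b j).toMul 1
      rcases hy with hy | hy | hy
      · rw [sq] at hy
        have h2 : (b i : Additive G) = b j + (Additive.ofMul y + Additive.ofMul y) := hy
        have h3 := congrArg (fun z => b.repr z i) h2
        simp [Finsupp.single_apply, hij.symm, Module.Basis.repr_self] at h3
        omega
      · rw [sq, one_mul] at hy
        have h2 : (b i : Additive G) = Additive.ofMul y + Additive.ofMul y := hy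
        have h3 := congrArg (fun z => b.repr z i) h2
        simp [Finsupp.single_apply, Module.Basis.repr_self] at h3
        omega
      · rw [sq, one_mul] at hy
        have h2 : (b j : Additive G) = Additive.ofMul y + Additive.ofMul y := hy
        have h3 := congrArg (fun z => b.repr z j) h2
        simp [Finsupp.single_apply, Module.Basis.repr_self] at h3
        omega
    rcases isEmpty_or_nonempty ι with hι | hι
    · haveI : Subsingleton (Additive G) := b.repr.toEquiv.subsingleton
      haveI : Subsingleton G := ‹Subsingleton (Additive G)›
      exact isCyclic_of_subsingleton
    · obtain ⟨i0⟩ := hι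
      refine ⟨(b i0).toMul, fun x => ?_⟩
      have : Additive.ofMul x = (b.repr (Additive.ofMul x) i0) • b i0 := by
        haveI : Unique ι := uniqueOfSubsingleton i0
        apply b.repr.injective
        refine Finsupp.ext fun j => ?_
        rw [Subsingleton.elim j i0]
        simp [Finsupp.single_apply]
      refine ⟨b.repr (Additive.ofMul x) i0, ?_⟩
      have := congrArg Additive.toMul this
      rw [toMul_zsmul] at this
      exact this.symm
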